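/- Let V, V' be finite-dimensional vector spaces over a field with nilpotent endomorphisms N, N', and let W, W' be their monodromy filtrations. If φ : V → V' is a linear map with φ ∘ N = N' ∘ φ, then φ(W_k V) ⊆ W'_k V' for all integers k. -/

import Mathlib

/-- `W` is the monodromy filtration of the nilpotent endomorphism `N`. -/
def IsMonodromyFiltration {K V : Type*} [Field K] [AddCommGroup V] [Module K V]
    (N : V →ₗ[K] V) (W : ℤ → Submodule K V) : Prop :=
  (∀ k : ℤ, W k ≤ W (k + 1)) ∧
  (∃ a : ℤ, ∀ k ≤ a, W k = ⊥) ∧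
  (∃ b : ℤ, ∀ k, b ≤ k → W k = ⊤) ∧
  (∀ k : ℤ, (W k).map N ≤ W (k - 2)) ∧
  (∀ k : ℤ, 0 ≤ k →
    ((W k).map ((N ^ k.toNat : Module.End K V) : V →ₗ[K] V) ⊔ W (-k - 1) = W (-k)) ∧
    (∀ x ∈ W k, (N ^ k.toNat : Module.End K V) x ∈ W (-k - 1) → x ∈ W (k - 1)))

section Aux

variable {K V : Type*} [Field K] [AddCommGroup V] [Module K V]
  {N : V →ₗ[K] V} {W : ℤ → Submodule K V}

/-- Monotonicity of the filtration. -/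
lemma IsMonodromyFiltration.mono (hW : IsMonodromyFiltration N W)
    {j k : ℤ} (h : j ≤ k) : W j ≤ W k := by
  have key : ∀ n : ℕ, W j ≤ W (j + n) := by
    intro n
    induction n with
    | zero => simp
    | succ n ih =>
      refine ih.trans ?_
      have h1 := hW.1 (j + n)
      have he : j + (n : ℤ) + 1 = j + ((n + 1 : ℕ) : ℤ) := by push_cast; ring
      rwa [he] at h1
  have hn := key (k - j).toNat
  rwa [show j + (((k - j).toNat : ℤ)) = k by
    rw [Int.toNat_of_nonneg (by omega)]; ring] at hn

/-- Iterated application of `N` lowers the filtration by `2n`. -/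
lemma IsMonodromyFiltration.map_pow (hW : IsMonodromyFiltration N W)
    (n : ℕ) (k : ℤ) :
    (W k).map ((N ^ n : Module.End K V) : V →ₗ[K] V) ≤ W (k - 2 * n) := by
  induction n generalizing k with
  | zero =>
    simp only [pow_zero, Nat.cast_zero, mul_zero, sub_zero, Module.End.one_eq_id,
      Submodule.map_id]
    exact le_rfl
  | succ n ih =>
    have h1 : (N ^ (n + 1) : Module.End K V) = (N ^ n : Module.End K V).comp N := by
      rw [pow_succ, Module.End.mul_eq_comp]
    rw [h1, Submodule.map_comp]
    refine le_trans (Submodule.map_mono (hW.2.2.2.1 k)) ?_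
    refine (ih (k - 2)).trans (hW.mono ?_)
    push_cast; omega

/-- For `k ≤ 0`, the filtration step `W k` is generated by the images `N^j (W j)`
for `j ≥ -k`: any submodule containing all these images contains `W k`. -/
lemma IsMonodromyFiltration.neg_le (hW : IsMonodromyFiltration N W)
    {k : ℤ} (hk : k ≤ 0) (S : Submodule K V)
    (hS : ∀ j : ℤ, -k ≤ j →
      (W j).map ((N ^ j.toNat : Module.End K V) : V →ₗ[K] V) ≤ S) :
    W k ≤ S := by
  obtain ⟨a, ha⟩ := hW.2.1
  have key : ∀ n : ℕ, W k ≤ S ⊔ W (k - n) := by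
    intro n
    induction n with
    | zero => simpa using le_sup_right
    | succ n ih =>
      have h0 : (0 : ℤ) ≤ n - k := by omega
      have h5 := (hW.2.2.2.2 ((n : ℤ) - k) h0).1
      have he2 : -((n : ℤ) - k) - 1 = k - ((n + 1 : ℕ) : ℤ) := by push_cast; ring
      have he : -((n : ℤ) - k) = k - (n : ℤ) := by ring
      rw [he2, he] at h5
      have hstep : W (k - (n : ℤ)) ≤ S ⊔ W (k - ((n + 1 : ℕ) : ℤ)) := by
        rw [← h5]
        exact sup_le_sup_right (hS _ (by omega)) _
      exact ih.trans (sup_le le_sup_left hstep)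
  have hn : k - (((k - a).toNat : ℤ)) ≤ a := by
    have := Int.self_le_toNat (k - a); omega
  have := key (k - a).toNat
  rwa [ha _ hn, sup_bot_eq] at this

end Aux

/-- Functoriality of the monodromy filtration: a linear map intertwining two
nilpotent endomorphisms is filtered with respect to the monodromy filtrations. -/
theorem monodromyFiltration_map_le
    {K V V' : Type*} [Field K] [AddCommGroup V] [Module K V] [FiniteDimensional K V]
    [AddCommGroup V'] [Module K V'] [FiniteDimensional K V']
    (N : V →ₗ[K] V) (N' : V' →ₗ[K] V') (hN : IsNilpotent N) (hN' : IsNilpotent N')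
    (W : ℤ → Submodule K V) (W' : ℤ → Submodule K V')
    (hW : IsMonodromyFiltration N W) (hW' : IsMonodromyFiltration N' W')
    (φ : V →ₗ[K] V') (hφ : φ.comp N = N'.comp φ) :
    ∀ k : ℤ, (W k).map φ ≤ W' k := by
  obtain ⟨b', hb'⟩ := hW'.2.2.1
  have hcomm : ∀ n : ℕ,
      ((N' ^ n : Module.End K V') : V' →ₗ[K] V').comp φ
        = φ.comp ((N ^ n : Module.End K V) : V →ₗ[K] V) :=
    Module.End.commute_pow_left_of_commute hφ.symm
  -- key transport: if φ(W j) ≤ W' j then φ(N^j W j) ≤ N'^j (W' j) ≤ W' (-j)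
  have himg : ∀ j : ℤ, 0 ≤ j → (W j).map φ ≤ W' j →
      ((W j).map ((N ^ j.toNat : Module.End K V) : V →ₗ[K] V)).map φ ≤ W' (-j) := by
    intro j hj hj'
    rw [← Submodule.map_comp, ← hcomm, Submodule.map_comp]
    refine le_trans (Submodule.map_mono hj') ?_
    have htn : ((j.toNat : ℤ)) = j := Int.toNat_of_nonneg hj
    have he : j - 2 * ((j.toNat : ℤ)) = -j := by omega
    rw [← he]
    exact hW'.map_pow j.toNat j
  -- functoriality for nonnegative degrees, by downward induction
  have pos : ∀ n : ℕ, ∀ k : ℤ, 0 ≤ k → b' ≤ k + n → (W k).map φ ≤ W' k := by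
    intro n
    induction n with
    | zero =>
      intro k hk hbk
      simp only [Nat.cast_zero, add_zero] at hbk
      rw [hb' k hbk]; exact le_top
    | succ n ih =>
      intro k hk hbk
      by_cases hbk' : b' ≤ k
      · rw [hb' k hbk']; exact le_top
      have IH : ∀ j : ℤ, k + 1 ≤ j → (W j).map φ ≤ W' j := by
        intro j hj
        exact ih j (by omega) (by omega)
      rintro _ ⟨x, hx, rfl⟩
      -- φ x lands in W' (k+1)
      have h1 : φ x ∈ W' (k + 1) :=
        IH (k + 1) le_rfl ⟨x, hW.mono (by omega) hx, rfl⟩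
      -- N^(k+1) x lands in W (-(k+1) - 1)
      have h2 : (N ^ (k + 1).toNat : Module.End K V) x ∈ W (-(k + 1) - 1) := by
        have hh := hW.map_pow (k + 1).toNat k ⟨x, hx, rfl⟩
        have htn : (((k + 1).toNat : ℤ)) = k + 1 := Int.toNat_of_nonneg (by omega)
        have harith : k - 2 * (((k + 1).toNat : ℤ)) = -(k + 1) - 1 := by omega
        rwa [harith] at hh
      -- hence φ (N^(k+1) x) = N'^(k+1) (φ x) lands in W' (-(k+1) - 1)
      have h3 : φ ((N ^ (k + 1).toNat : Module.End K V) x) ∈ W' (-(k + 1) - 1) := by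
        have hle : W (-(k + 1) - 1) ≤ (W' (-(k + 1) - 1)).comap φ := by
          refine hW.neg_le (by omega) _ ?_
          intro j hj
          rw [← Submodule.map_le_iff_le_comap]
          exact (himg j (by omega) (IH j (by omega))).trans (hW'.mono (by omega))
        exact hle h2
      have h4 : (N' ^ (k + 1).toNat : Module.End K V') (φ x) ∈ W' (-(k + 1) - 1) := by
        have hc := LinearMap.congr_fun (hcomm (k + 1).toNat) x
        simp only [LinearMap.comp_apply] at hc
        rw [hc]; exact h3
      -- conclude by the injectivity axiom at level k+1
      have h5 := (hW'.2.2.2.2 (k + 1) (by omega)).2 (φ x) h1 h4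
      have : k + 1 - 1 = k := by ring
      rwa [this] at h5
  intro k
  rcases le_or_gt 0 k with hk | hk
  · exact pos (b' - k).toNat k hk (by have := Int.self_le_toNat (b' - k); omega)
  · refine Submodule.map_le_iff_le_comap.mpr (hW.neg_le (by omega) _ ?_)
    intro j hj
    rw [← Submodule.map_le_iff_le_comap]
    have hφj : (W j).map φ ≤ W' j :=
      pos (b' - j).toNat j (by omega) (by have := Int.self_le_toNat (b' - j); omega)
    exact (himg j (by omega) hφj).trans (hW'.mono (by omega))
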